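/- arXiv:math/0501436 — 5 statements merged into one kernel-verified Lean document; each statement's English description precedes it below -/
import Mathlib

section
/- Every bimorphism from A × B to a join-semilattice with zero C factors uniquely through the tensor product: there exists a unique zero-preserving join-homomorphism g : A ⊗ B → C with g(a ⊗ b) = f(⟨a,b⟩) for all a ∈ A, b ∈ B. -/
variable {A B : Type*} [SemilatticeSup A] [OrderBot A] [SemilatticeSup B] [OrderBot B]

/-- A bi-ideal of `A × B`: a downward closed subset containing
`∇ = (A × {0}) ∪ ({0} × B)` that is closed under lateral joins. -/
def IsBiIdeal (I : Set (A × B)) : Prop :=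
  (∀ ⦃p q : A × B⦄, q ≤ p → p ∈ I → q ∈ I) ∧
  (∀ a : A, (a, (⊥ : B)) ∈ I) ∧
  (∀ b : B, ((⊥ : A), b) ∈ I) ∧
  (∀ a₀ a₁ : A, ∀ b : B, (a₀, b) ∈ I → (a₁, b) ∈ I → (a₀ ⊔ a₁, b) ∈ I) ∧
  (∀ a : A, ∀ b₀ b₁ : B, (a, b₀) ∈ I → (a, b₁) ∈ I → (a, b₀ ⊔ b₁) ∈ I)

/-- `∇ = (A × {0}) ∪ ({0} × B)`, the least bi-ideal. -/
def nabla (A B : Type*) [SemilatticeSup A] [OrderBot A] [SemilatticeSup B] [OrderBot B] :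
    Set (A × B) := {p | p.1 = ⊥ ∨ p.2 = ⊥}

/-- The pure tensor `a ⊗ b`. -/
def pureTensor (a : A) (b : B) : Set (A × B) :=
  nabla A B ∪ {p | p.1 ≤ a ∧ p.2 ≤ b}

/-- The bi-ideal generated by a subset `X` of `A × B`. -/
def biGen (X : Set (A × B)) : Set (A × B) := ⋂₀ {K | IsBiIdeal K ∧ X ⊆ K}

/-- The join of two bi-ideals in the lattice of bi-ideals. -/
def biSup (I J : Set (A × B)) : Set (A × B) := biGen (I ∪ J)

/-- Elements of the tensor product `A ⊗ B`: the compact (finitely generated) bi-ideals. -/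
def IsTensorElt (I : Set (A × B)) : Prop := ∃ S : Finset (A × B), I = biGen ↑S

/-- A bimorphism `f : A × B → C`. -/
def IsBimorphism {A B C : Type*} [SemilatticeSup A] [OrderBot A] [SemilatticeSup B]
    [OrderBot B] [SemilatticeSup C] [OrderBot C] (f : A → B → C) : Prop :=
  (∀ a : A, f a ⊥ = ⊥) ∧ (∀ b : B, f ⊥ b = ⊥) ∧
  (∀ a₀ a₁ : A, ∀ b : B, f (a₀ ⊔ a₁) b = f a₀ b ⊔ f a₁ b) ∧
  (∀ a : A, ∀ b₀ b₁ : B, f a (b₀ ⊔ b₁) = f a b₀ ⊔ f a b₁)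

section Aux

lemma subset_biGen (X : Set (A × B)) : X ⊆ biGen X :=
  fun p hp => fun _K hK => hK.2 hp

lemma biGen_subset {X K : Set (A × B)} (hK : IsBiIdeal K) (h : X ⊆ K) : biGen X ⊆ K :=
  fun _p hp => hp K ⟨hK, h⟩

lemma isBiIdeal_biGen (X : Set (A × B)) : IsBiIdeal (biGen X) := by
  refine ⟨fun p q hqp hp => ?_, fun a => ?_, fun b => ?_,
    fun a₀ a₁ b h₀ h₁ => ?_, fun a b₀ b₁ h₀ h₁ => ?_⟩
  · intro K hK; exact hK.1.1 hqp (hp K hK)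
  · intro K hK; exact hK.1.2.1 a
  · intro K hK; exact hK.1.2.2.1 b
  · intro K hK; exact hK.1.2.2.2.1 a₀ a₁ b (h₀ K hK) (h₁ K hK)
  · intro K hK; exact hK.1.2.2.2.2 a b₀ b₁ (h₀ K hK) (h₁ K hK)

lemma isBiIdeal_nabla : IsBiIdeal (nabla A B) := by
  refine ⟨fun p q hqp hp => ?_, fun a => Or.inr rfl, fun b => Or.inl rfl,
    fun a₀ a₁ b h₀ h₁ => ?_, fun a b₀ b₁ h₀ h₁ => ?_⟩
  · rcases hp with h | h
    · exact Or.inl (le_bot_iff.mp (h ▸ hqp.1))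
    · exact Or.inr (le_bot_iff.mp (h ▸ hqp.2))
  · rcases h₀ with h₀ | h₀
    · rcases h₁ with h₁ | h₁
      · exact Or.inl (by simp [show a₀ = ⊥ from h₀, show a₁ = ⊥ from h₁])
      · exact Or.inr h₁
    · exact Or.inr h₀
  · rcases h₀ with h₀ | h₀
    · exact Or.inl h₀
    · rcases h₁ with h₁ | h₁
      · exact Or.inl h₁
      · exact Or.inr (by simp [show b₀ = ⊥ from h₀, show b₁ = ⊥ from h₁])

lemma nabla_subset {K : Set (A × B)} (hK : IsBiIdeal K) : nabla A B ⊆ K := by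
  rintro ⟨x, y⟩ (h | h)
  · simp only [Set.mem_setOf_eq] at h; subst h; exact hK.2.2.1 y
  · simp only [Set.mem_setOf_eq] at h; subst h; exact hK.2.1 x

lemma nabla_eq_biGen_empty : nabla A B = biGen (↑(∅ : Finset (A × B))) := by
  apply Set.Subset.antisymm
  · exact nabla_subset (isBiIdeal_biGen _)
  · exact biGen_subset isBiIdeal_nabla (by simp)

lemma isBiIdeal_pureTensor (a : A) (b : B) : IsBiIdeal (pureTensor a b) := by
  refine ⟨fun p q hqp hp => ?_, fun a' => Or.inl (Or.inr rfl), fun b' => Or.inl (Or.inl rfl),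
    fun a₀ a₁ b' h₀ h₁ => ?_, fun a' b₀ b₁ h₀ h₁ => ?_⟩
  · rcases hp with h | h
    · exact Or.inl (isBiIdeal_nabla.1 hqp h)
    · exact Or.inr ⟨hqp.1.trans h.1, hqp.2.trans h.2⟩
  · rcases h₀ with (h₀ | h₀) | h₀
    · rcases h₁ with (h₁ | h₁) | h₁
      · exact Or.inl (Or.inl (by simp [show a₀ = ⊥ from h₀, show a₁ = ⊥ from h₁]))
      · exact Or.inl (Or.inr h₁)
      · exact Or.inr ⟨by simp [show a₀ = ⊥ from h₀, h₁.1], h₁.2⟩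
    · exact Or.inl (Or.inr h₀)
    · rcases h₁ with (h₁ | h₁) | h₁
      · exact Or.inr ⟨by simp [show a₁ = ⊥ from h₁, h₀.1], h₀.2⟩
      · exact Or.inl (Or.inr h₁)
      · exact Or.inr ⟨sup_le h₀.1 h₁.1, h₀.2⟩
  · rcases h₀ with (h₀ | h₀) | h₀
    · exact Or.inl (Or.inl h₀)
    · rcases h₁ with (h₁ | h₁) | h₁
      · exact Or.inl (Or.inl h₁)
      · exact Or.inl (Or.inr (by simp [show b₀ = ⊥ from h₀, show b₁ = ⊥ from h₁]))
      · exact Or.inr ⟨h₁.1, by simp [show b₀ = ⊥ from h₀, h₁.2]⟩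
    · rcases h₁ with (h₁ | h₁) | h₁
      · exact Or.inl (Or.inl h₁)
      · exact Or.inr ⟨h₀.1, by simp [show b₁ = ⊥ from h₁, h₀.2]⟩
      · exact Or.inr ⟨h₀.1, sup_le h₀.2 h₁.2⟩

lemma pureTensor_eq_biGen (a : A) (b : B) :
    pureTensor a b = biGen (↑({(a, b)} : Finset (A × B))) := by
  apply Set.Subset.antisymm
  · intro p hp
    rcases hp with h | h
    · exact nabla_subset (isBiIdeal_biGen _) h
    · exact (isBiIdeal_biGen _).1 (Prod.mk_le_mk.mpr ⟨h.1, h.2⟩)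
        (subset_biGen _ (by simp))
  · refine biGen_subset (isBiIdeal_pureTensor a b) ?_
    simp only [Finset.coe_singleton, Set.singleton_subset_iff]
    exact Or.inr ⟨le_rfl, le_rfl⟩

lemma biSup_biGen [DecidableEq (A × B)] (S T : Finset (A × B)) :
    biSup (biGen (↑S : Set (A × B))) (biGen ↑T) = biGen (↑(S ∪ T)) := by
  apply Set.Subset.antisymm
  · refine biGen_subset (isBiIdeal_biGen _) ?_
    apply Set.union_subset
    · refine biGen_subset (isBiIdeal_biGen _) ?_
      intro p hp
      refine subset_biGen _ ?_
      simp only [Finset.coe_union, Set.mem_union]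
      exact Or.inl hp
    · refine biGen_subset (isBiIdeal_biGen _) ?_
      intro p hp
      refine subset_biGen _ ?_
      simp only [Finset.coe_union, Set.mem_union]
      exact Or.inr hp
  · refine biGen_subset (isBiIdeal_biGen _) ?_
    intro p hp
    simp only [Finset.coe_union, Set.mem_union] at hp
    rcases hp with hp | hp
    · exact subset_biGen _ (Or.inl (subset_biGen _ hp))
    · exact subset_biGen _ (Or.inr (subset_biGen _ hp))

end Aux

section Bim

variable {C : Type*} [SemilatticeSup C] [OrderBot C] {f : A → B → C}

lemma bim_mono (hf : IsBimorphism f) {a a' : A} {b b' : B} (ha : a' ≤ a) (hb : b' ≤ b) :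
    f a' b' ≤ f a b := by
  calc f a' b' ≤ f a b' := by
        rw [← sup_eq_right.mpr ha, hf.2.2.1]; exact le_sup_left
    _ ≤ f a b := by
        rw [← sup_eq_right.mpr hb, hf.2.2.2]; exact le_sup_left

lemma isBiIdeal_le (hf : IsBimorphism f) (c : C) :
    IsBiIdeal {p : A × B | f p.1 p.2 ≤ c} := by
  refine ⟨fun p q hqp hp => le_trans (bim_mono hf hqp.1 hqp.2) hp,
    fun a => by simp [Set.mem_setOf_eq, hf.1 a],
    fun b => by simp [Set.mem_setOf_eq, hf.2.1 b],
    fun a₀ a₁ b h₀ h₁ => ?_, fun a b₀ b₁ h₀ h₁ => ?_⟩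
  · simp only [Set.mem_setOf_eq, hf.2.2.1]; exact sup_le h₀ h₁
  · simp only [Set.mem_setOf_eq, hf.2.2.2]; exact sup_le h₀ h₁

lemma sup_well_defined (hf : IsBimorphism f) {S T : Finset (A × B)}
    (h : biGen (↑S : Set (A × B)) = biGen ↑T) :
    S.sup (fun p => f p.1 p.2) = T.sup (fun p => f p.1 p.2) := by
  have key : ∀ S T : Finset (A × B), biGen (↑S : Set (A × B)) ⊆ biGen ↑T →
      S.sup (fun p => f p.1 p.2) ≤ T.sup (fun p => f p.1 p.2) := by
    intro S T hst
    apply Finset.sup_le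
    intro p hp
    have h1 : p ∈ biGen (↑T : Set (A × B)) := hst (subset_biGen _ (by exact_mod_cast hp))
    have h2 : biGen (↑T : Set (A × B)) ⊆
        {q : A × B | f q.1 q.2 ≤ T.sup (fun p => f p.1 p.2)} := by
      refine biGen_subset (isBiIdeal_le hf _) ?_
      intro q hq
      exact Finset.le_sup (f := fun p : A × B => f p.1 p.2) (by exact_mod_cast hq)
    exact h2 h1
  exact le_antisymm (key S T h.le) (key T S h.ge)

end Bim

/-- Every bimorphism `f : A × B → C` factors uniquely through the tensor product
`A ⊗ B` via a zero- and join-preserving map `g` with `g (a ⊗ b) = f a b`. -/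
theorem bimorphism_factors_uniquely {A B C : Type*} [SemilatticeSup A] [OrderBot A]
    [SemilatticeSup B] [OrderBot B] [SemilatticeSup C] [OrderBot C]
    (f : A → B → C) (hf : IsBimorphism f) :
    ∃ g : Set (A × B) → C,
      ((∀ a : A, ∀ b : B, g (pureTensor a b) = f a b) ∧
        g (nabla A B) = ⊥ ∧
        (∀ I J : Set (A × B), IsTensorElt I → IsTensorElt J →
          g (biSup I J) = g I ⊔ g J)) ∧
      ∀ g' : Set (A × B) → C,
        ((∀ a : A, ∀ b : B, g' (pureTensor a b) = f a b) ∧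
          g' (nabla A B) = ⊥ ∧
          (∀ I J : Set (A × B), IsTensorElt I → IsTensorElt J →
            g' (biSup I J) = g' I ⊔ g' J)) →
        ∀ I : Set (A × B), IsTensorElt I → g' I = g I := by
  classical
  set F : A × B → C := fun p => f p.1 p.2 with hF
  set g : Set (A × B) → C :=
    fun I => if h : IsTensorElt I then h.choose.sup F else ⊥ with hg
  have gdef : ∀ (I : Set (A × B)) (h : IsTensorElt I), g I = h.choose.sup F := by
    intro I h
    simp only [hg]
    rw [dif_pos h]
  have gspec : ∀ S : Finset (A × B), g (biGen ↑S) = S.sup F := by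
    intro S
    have hT : IsTensorElt (biGen (↑S : Set (A × B))) := ⟨S, rfl⟩
    rw [gdef _ hT]
    exact sup_well_defined hf hT.choose_spec.symm
  refine ⟨g, ⟨?_, ?_, ?_⟩, ?_⟩
  · intro a b
    rw [pureTensor_eq_biGen, gspec]
    simp [hF]
  · rw [nabla_eq_biGen_empty, gspec]
    simp
  · rintro I J ⟨S, hS⟩ ⟨T, hT⟩
    subst hS; subst hT
    rw [biSup_biGen, gspec, gspec, gspec, Finset.sup_union]
  · rintro g' ⟨hg1, hg2, hg3⟩ I ⟨S, hS⟩
    subst hS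
    rw [gspec]
    induction S using Finset.induction_on with
    | empty => rw [← nabla_eq_biGen_empty, hg2]; simp
    | @insert p S hp ih =>
      have hins : ({(p.1, p.2)} : Finset (A × B)) ∪ S = insert p S := by
        simp [Finset.insert_eq, -Finset.singleton_union]
      have heq : biGen (↑(insert p S) : Set (A × B)) =
          biSup (pureTensor p.1 p.2) (biGen ↑S) := by
        rw [pureTensor_eq_biGen, biSup_biGen, hins]
      rw [heq, hg3 _ _ ⟨{(p.1, p.2)}, (pureTensor_eq_biGen p.1 p.2)⟩ ⟨S, rfl⟩, hg1, ih,
        Finset.sup_insert]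
end

section
/- An L-homomorphism f : A → B of join-semilattices with zero is a partial meet-homomorphism: for all n > 0 and a₀, …, a_{n−1} ∈ A, if a = a₀ ∧ ⋯ ∧ a_{n−1} exists in A, then f(a₀) ∧ ⋯ ∧ f(a_{n−1}) exists in B and equals f(a). -/
/-- An L-homomorphism of join-semilattices with zero: a zero-preserving
join-homomorphism `f` such that whenever `b ≤ f a₀` and `b ≤ f a₁`, there is
`x ≤ a₀, a₁` with `b ≤ f x`. -/
def IsLHom {A B : Type*} [SemilatticeSup A] [OrderBot A] [SemilatticeSup B] [OrderBot B]
    (f : A → B) : Prop :=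
  f ⊥ = ⊥ ∧ (∀ a₀ a₁ : A, f (a₀ ⊔ a₁) = f a₀ ⊔ f a₁) ∧
  (∀ a₀ a₁ : A, ∀ b : B, b ≤ f a₀ → b ≤ f a₁ → ∃ x : A, x ≤ a₀ ∧ x ≤ a₁ ∧ b ≤ f x)

theorem IsLHom.monotone {A B : Type*} [SemilatticeSup A] [OrderBot A] [SemilatticeSup B]
    [OrderBot B] {f : A → B} (hf : IsLHom f) : Monotone f := by
  intro x y hxy
  have : f y = f x ⊔ f y := by rw [← hf.2.1, sup_eq_right.mpr hxy]
  rw [this]; exact le_sup_left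

theorem IsLHom.exists_le {A B : Type*} [SemilatticeSup A] [OrderBot A] [SemilatticeSup B]
    [OrderBot B] {f : A → B} (hf : IsLHom f) :
    ∀ n : ℕ, 0 < n → ∀ a : Fin n → A, ∀ b : B, (∀ i, b ≤ f (a i)) →
      ∃ x : A, (∀ i, x ≤ a i) ∧ b ≤ f x := by
  intro n
  induction n with
  | zero => intro h; exact absurd h (lt_irrefl 0)
  | succ n ih =>
    intro _ a b hb
    rcases Nat.eq_zero_or_pos n with hn | hn
    · subst hn
      exact ⟨a 0, fun i => le_of_eq (congrArg a (Fin.fin_one_eq_zero i).symm), hb 0⟩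
    · obtain ⟨x, hx, hbx⟩ := ih hn (fun i => a i.castSucc) b (fun i => hb i.castSucc)
      obtain ⟨y, hy1, hy2, hy3⟩ := hf.2.2 x (a (Fin.last n)) b hbx (hb (Fin.last n))
      refine ⟨y, fun i => ?_, hy3⟩
      refine Fin.lastCases hy2 (fun j => hy1.trans (hx j)) i

/-- An L-homomorphism is a partial meet-homomorphism: if a finite nonempty meet
exists in `A`, then the meet of the images exists in `B` and equals the image. -/
theorem lhom_partial_meet_hom {A B : Type*} [SemilatticeSup A] [OrderBot A]
    [SemilatticeSup B] [OrderBot B] (f : A → B) (hf : IsLHom f) :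
    ∀ n : ℕ, 0 < n → ∀ a : Fin n → A, ∀ m : A,
      IsGLB (Set.range a) m → IsGLB (Set.range (fun i => f (a i))) (f m) := by
  intro n hn a m hm
  constructor
  · rintro _ ⟨i, rfl⟩
    exact hf.monotone (hm.1 ⟨i, rfl⟩)
  · rintro b hb
    have hb' : ∀ i, b ≤ f (a i) := fun i => hb ⟨i, rfl⟩
    obtain ⟨x, hx, hbx⟩ := hf.exists_le n hn a b hb'
    have : x ≤ m := hm.2 (by rintro _ ⟨i, rfl⟩; exact hx i)
    exact hbx.trans (hf.monotone this)
end

section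
/- A one-to-one L-homomorphism f : A → B of join-semilattices with zero is a partial meet-embedding: for all n > 0 and a₀, …, a_{n−1} ∈ A, the meet a₀ ∧ ⋯ ∧ a_{n−1} exists in A if and only if f(a₀) ∧ ⋯ ∧ f(a_{n−1}) exists in B, and in that case f maps the former to the latter. -/
/-- A one-to-one L-homomorphism is a partial meet-embedding: a finite nonempty
meet exists in `A` iff the meet of the images exists in `B`, and then `f` maps
the former to the latter. -/
theorem lhom_injective_partial_meet_embedding {A B : Type*} [SemilatticeSup A]
    [OrderBot A] [SemilatticeSup B] [OrderBot B] (f : A → B) (hf : IsLHom f)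
    (hinj : Function.Injective f) :
    ∀ n : ℕ, 0 < n → ∀ a : Fin n → A,
      ((∃ m : A, IsGLB (Set.range a) m) ↔
        (∃ c : B, IsGLB (Set.range (fun i => f (a i))) c)) ∧
      (∀ m : A, IsGLB (Set.range a) m →
        IsGLB (Set.range (fun i => f (a i))) (f m)) := by
 
  obtain ⟨hbot, hsup, hL⟩ := hf
  have hmono : ∀ x y : A, x ≤ y → f x ≤ f y := by
    intro x y hxy
    have h : f (x ⊔ y) = f x ⊔ f y := hsup x y
    rw [sup_eq_right.mpr hxy] at h
    rw [h]; exact le_sup_left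
  have hrefl : ∀ x y : A, f x ≤ f y → x ≤ y := by
    intro x y h
    have h2 : f (x ⊔ y) = f y := by rw [hsup]; exact sup_eq_right.mpr h
    exact sup_eq_right.mp (hinj h2)
  have key : ∀ k : ℕ, ∀ a : Fin (k+1) → A, ∀ b : B,
      (∀ i, b ≤ f (a i)) → ∃ x : A, (∀ i, x ≤ a i) ∧ b ≤ f x := by
    intro k
    induction k with
    | zero =>
      intro a b hb
      exact ⟨a 0, fun i => by fin_cases i; exact le_rfl, hb 0⟩
    | succ k ih =>
      intro a b hb
      obtain ⟨x, hx, hbx⟩ := ih (fun i => a i.castSucc) b (fun i => hb i.castSucc)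
      obtain ⟨y, hy1, hy2, hby⟩ := hL x (a (Fin.last _)) b hbx (hb _)
      refine ⟨y, ?_, hby⟩
      intro i
      induction i using Fin.lastCases with
      | last => exact hy2
      | cast j => exact le_trans hy1 (hx j)
  intro n hn a
  obtain ⟨k, rfl⟩ := Nat.exists_eq_succ_of_ne_zero hn.ne'
  have glb_image : ∀ m : A, IsGLB (Set.range a) m →
      IsGLB (Set.range fun i => f (a i)) (f m) := by
    intro m hm
    constructor
    · rintro _ ⟨i, rfl⟩
      exact hmono _ _ (hm.1 ⟨i, rfl⟩)
    · intro b hb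
      have hb' : ∀ i, b ≤ f (a i) := fun i => hb ⟨i, rfl⟩
      obtain ⟨x, hx, hbx⟩ := key k a b hb'
      exact le_trans hbx (hmono _ _ (hm.2 (by rintro _ ⟨i, rfl⟩; exact hx i)))
  refine ⟨⟨fun ⟨m, hm⟩ => ⟨f m, glb_image m hm⟩, ?_⟩, glb_image⟩
  rintro ⟨c, hc⟩
  have hc' : ∀ i, c ≤ f (a i) := fun i => hc.1 ⟨i, rfl⟩
  obtain ⟨x, hx, hcx⟩ := key k a c hc'
  have hfx : f x = c :=
    le_antisymm (hc.2 (by rintro _ ⟨i, rfl⟩; exact hmono _ _ (hx i))) hcx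
  refine ⟨x, ⟨by rintro _ ⟨i, rfl⟩; exact hx i, ?_⟩⟩
  intro y hy
  apply hrefl
  rw [hfx]
  exact hc.2 (by rintro _ ⟨i, rfl⟩; exact hmono _ _ (hy ⟨i, rfl⟩))
end

section
/- If A and B are distributive join-semilattices with zero, then the join I ∨ J of two bi-ideals I, J of A × B equals ⋃_{n<ω} X_n, where X₀ = I ∪ J and X_{n+1} is the set of lateral joins of two elements of X_n; moreover each X_n is a hereditary (downward closed) subset of A × B. -/
variable {A B : Type*} [SemilatticeSup A] [OrderBot A] [SemilatticeSup B] [OrderBot B]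

/-- A join-semilattice is distributive if `u ≤ x₀ ⊔ x₁` implies
`u = x₀' ⊔ x₁'` for some `x₀' ≤ x₀`, `x₁' ≤ x₁`. -/
def IsDistribJoinSemilattice (A : Type*) [SemilatticeSup A] : Prop :=
  ∀ u x₀ x₁ : A, u ≤ x₀ ⊔ x₁ → ∃ x₀' x₁' : A, x₀' ≤ x₀ ∧ x₁' ≤ x₁ ∧ u = x₀' ⊔ x₁'

/-- The set of lateral joins of two elements of `X`. -/
def latSet {A B : Type*} [SemilatticeSup A] [SemilatticeSup B] (X : Set (A × B)) :
    Set (A × B) :=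
  {p | ∃ q ∈ X, ∃ r ∈ X,
    (q.2 = r.2 ∧ p = (q.1 ⊔ r.1, q.2)) ∨ (q.1 = r.1 ∧ p = (q.1, q.2 ⊔ r.2))}

/-- `X 0 = I ∪ J`, `X (n+1)` = lateral joins of two elements of `X n`. -/
def iterLat {A B : Type*} [SemilatticeSup A] [SemilatticeSup B]
    (I J : Set (A × B)) : ℕ → Set (A × B)
  | 0 => I ∪ J
  | n + 1 => latSet (iterLat I J n)

/-- In the distributive case, the join of bi-ideals `I` and `J` is
`⋃ₙ Xₙ`, and each `Xₙ` is hereditary. -/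
theorem biSup_eq_iUnion_iterLat {A B : Type*} [SemilatticeSup A] [OrderBot A]
    [SemilatticeSup B] [OrderBot B]
    (hA : IsDistribJoinSemilattice A) (hB : IsDistribJoinSemilattice B)
    (I J : Set (A × B)) (hI : IsBiIdeal I) (hJ : IsBiIdeal J) :
    (biSup I J = ⋃ n : ℕ, iterLat I J n) ∧
    (∀ n : ℕ, ∀ p q : A × B, q ≤ p → p ∈ iterLat I J n → q ∈ iterLat I J n) := by
  -- hereditary
  have hered : ∀ n : ℕ, ∀ p q : A × B, q ≤ p → p ∈ iterLat I J n → q ∈ iterLat I J n := by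
    intro n
    induction n with
    | zero =>
      intro p q hqp hp
      rcases hp with hp | hp
      · exact Or.inl (hI.1 hqp hp)
      · exact Or.inr (hJ.1 hqp hp)
    | succ n ih =>
      rintro p ⟨u, v⟩ hqp ⟨⟨a₀, b₀⟩, hq, ⟨a₁, b₁⟩, hr, hcase⟩
      rcases hcase with ⟨hb, hp⟩ | ⟨ha, hp⟩
      · simp only at hb hp
        subst hp
        obtain ⟨hu, hv⟩ := hqp
        obtain ⟨a₀', a₁', h0, h1, heq⟩ := hA u a₀ a₁ hu
        refine ⟨(a₀', v), ih (a₀, b₀) (a₀', v) ⟨h0, hv⟩ hq,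
          (a₁', v), ih (a₁, b₁) (a₁', v) ⟨h1, hb ▸ hv⟩ hr, Or.inl ⟨rfl, ?_⟩⟩
        simp [heq]
      · simp only at ha hp
        subst hp
        obtain ⟨hu, hv⟩ := hqp
        obtain ⟨b₀', b₁', h0, h1, heq⟩ := hB v b₀ b₁ hv
        refine ⟨(u, b₀'), ih (a₀, b₀) (u, b₀') ⟨hu, h0⟩ hq,
          (u, b₁'), ih (a₁, b₁) (u, b₁') ⟨ha ▸ hu, h1⟩ hr, Or.inr ⟨rfl, ?_⟩⟩
        simp [heq]
  have mono : ∀ n : ℕ, iterLat I J n ⊆ iterLat I J (n + 1) := by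
    intro n p hp
    exact ⟨p, hp, p, hp, Or.inl ⟨rfl, by simp⟩⟩
  have mono' : ∀ m n : ℕ, m ≤ n → iterLat I J m ⊆ iterLat I J n := by
    intro m n h
    induction h with
    | refl => exact le_refl _
    | step _ ih => exact fun p hp => mono _ (ih hp)
  refine ⟨?_, hered⟩
  have hbi : IsBiIdeal (⋃ n : ℕ, iterLat I J n) := by
    refine ⟨?_, ?_, ?_, ?_, ?_⟩
    · rintro p q hqp hp
      obtain ⟨_, ⟨n, rfl⟩, hp⟩ := hp
      exact Set.mem_iUnion.2 ⟨n, hered n p q hqp hp⟩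
    · intro a; exact Set.mem_iUnion.2 ⟨0, Or.inl (hI.2.1 a)⟩
    · intro b; exact Set.mem_iUnion.2 ⟨0, Or.inl (hI.2.2.1 b)⟩
    · intro a₀ a₁ b h₀ h₁
      obtain ⟨_, ⟨m, rfl⟩, h₀⟩ := h₀
      obtain ⟨_, ⟨n, rfl⟩, h₁⟩ := h₁
      refine Set.mem_iUnion.2 ⟨max m n + 1,
        ⟨(a₀, b), mono' m _ (le_max_left m n) h₀, (a₁, b), mono' n _ (le_max_right m n) h₁,
          Or.inl ⟨rfl, rfl⟩⟩⟩
    · intro a b₀ b₁ h₀ h₁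
      obtain ⟨_, ⟨m, rfl⟩, h₀⟩ := h₀
      obtain ⟨_, ⟨n, rfl⟩, h₁⟩ := h₁
      refine Set.mem_iUnion.2 ⟨max m n + 1,
        ⟨(a, b₀), mono' m _ (le_max_left m n) h₀, (a, b₁), mono' n _ (le_max_right m n) h₁,
          Or.inr ⟨rfl, rfl⟩⟩⟩
  apply Set.Subset.antisymm
  · intro p hp
    exact hp _ ⟨hbi, fun q hq => Set.mem_iUnion.2 ⟨0, hq⟩⟩
  · intro p hp
    obtain ⟨_, ⟨n, rfl⟩, hp⟩ := hp
    intro K hK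
    obtain ⟨⟨hher, _, _, hlatA, hlatB⟩, hsub⟩ := hK
    have key : ∀ m : ℕ, ∀ p ∈ iterLat I J m, p ∈ K := by
      intro m
      induction m with
      | zero => exact fun p hp => hsub hp
      | succ m ih =>
        rintro p ⟨⟨a₀, b₀⟩, hq, ⟨a₁, b₁⟩, hr, hcase⟩
        rcases hcase with ⟨hb, rfl⟩ | ⟨ha, rfl⟩
        · have hb' : b₀ = b₁ := hb
          subst hb'
          exact hlatA a₀ a₁ b₀ (ih _ hq) (ih _ hr)
        · have ha' : a₀ = a₁ := ha
          subst ha'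
          exact hlatB a₀ b₀ b₁ (ih _ hq) (ih _ hr)
    exact key n p hp
end

section
/- Let A and B be lattices with zero and C a sub-tensor product of A and B. If α, α′ are congruences of A and β, β′ congruences of B, then (α ⊙_C β) ≤ (α′ ⊠_C β′) if and only if α ≤ α′ or β ≤ β′. Here α ⊠_C β is the restriction to C of the congruence α □ β on bi-ideals, and α ⊙_C β = (α ⊠_C ω_B) ∧ (ω_A ⊠_C β). -/
variable {A B : Type*} [SemilatticeSup A] [OrderBot A] [SemilatticeSup B] [OrderBot B]

/-- A sub-tensor product of `A` and `B`: a set of elements of `A ⊗ B` containing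
all pure and mixed tensors, closed under finite intersection, and forming a
lattice under containment. -/
def IsSubTensorProduct (C : Set (Set (A × B))) : Prop :=
  (∀ I ∈ C, IsTensorElt I) ∧
  (∀ a : A, ∀ b : B, pureTensor a b ∈ C) ∧
  (∀ a₀ a₁ : A, ∀ b₀ b₁ : B, ((a₀ ≤ a₁ ∧ b₁ ≤ b₀) ∨ (a₁ ≤ a₀ ∧ b₀ ≤ b₁)) →
    biSup (pureTensor a₀ b₀) (pureTensor a₁ b₁) ∈ C) ∧
  (∀ I ∈ C, ∀ J ∈ C, I ∩ J ∈ C) ∧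
  (∀ I ∈ C, ∀ J ∈ C, ∃ K ∈ C, I ⊆ K ∧ J ⊆ K ∧ ∀ L ∈ C, I ⊆ L → J ⊆ L → K ⊆ L)

/-- The join of `I` and `J` in the lattice `C` (least upper bound in `C`). -/
def joinC (C : Set (Set (A × B))) (I J : Set (A × B)) : Set (A × B) :=
  ⋂₀ {K | K ∈ C ∧ I ⊆ K ∧ J ⊆ K}

/-- A congruence of the lattice `C` (ordered by containment, with meet given by
intersection and join given by `joinC`). -/
def IsCongOn (C : Set (Set (A × B))) (γ : Set (A × B) → Set (A × B) → Prop) : Prop :=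
  (∀ I ∈ C, γ I I) ∧
  (∀ I ∈ C, ∀ J ∈ C, γ I J → γ J I) ∧
  (∀ I ∈ C, ∀ J ∈ C, ∀ K ∈ C, γ I J → γ J K → γ I K) ∧
  (∀ I ∈ C, ∀ I' ∈ C, ∀ J ∈ C, ∀ J' ∈ C, γ I I' → γ J J' →
    γ (I ∩ J) (I' ∩ J') ∧ γ (joinC C I J) (joinC C I' J'))

/-- The principal congruence `Θ_C(U, V)` of the lattice `C`. -/
def princCongOn (C : Set (Set (A × B))) (U V : Set (A × B))
    (H K : Set (A × B)) : Prop :=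
  ∀ γ : Set (A × B) → Set (A × B) → Prop, IsCongOn C γ → γ U V → γ H K

/-- The congruence `α □ β` on bi-ideals. -/
def boxCong (α : A → A → Prop) (β : B → B → Prop)
    (H K : Set (A × B)) : Prop :=
  (∀ p ∈ H, ∃ q ∈ K, α p.1 q.1 ∧ β p.2 q.2) ∧
  (∀ q ∈ K, ∃ p ∈ H, α q.1 p.1 ∧ β q.2 p.2)

/-- A lattice congruence on a lattice `L`. -/
def IsLatCong {L : Type*} [Lattice L] (α : L → L → Prop) : Prop :=
  Equivalence α ∧
  ∀ x x' y y' : L, α x x' → α y y' → α (x ⊔ y) (x' ⊔ y') ∧ α (x ⊓ y) (x' ⊓ y')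

/-- The principal lattice congruence `Θ(u, v)` on a lattice `L`. -/
def princCong {L : Type*} [Lattice L] (u v : L) (x y : L) : Prop :=
  ∀ α : L → L → Prop, IsLatCong α → α u v → α x y

lemma mem_pureTensor {a : A} {b : B} {p : A × B} :
    p ∈ pureTensor a b ↔ p.1 = ⊥ ∨ p.2 = ⊥ ∨ (p.1 ≤ a ∧ p.2 ≤ b) := by
  simp [pureTensor, nabla, Set.mem_union, Set.mem_setOf_eq, or_assoc]

lemma mem_pure_union {a b : A} {c d : B} {p : A × B} :
    p ∈ pureTensor a d ∪ pureTensor b c ↔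
      p.1 = ⊥ ∨ p.2 = ⊥ ∨ (p.1 ≤ a ∧ p.2 ≤ d) ∨ (p.1 ≤ b ∧ p.2 ≤ c) := by
  simp only [Set.mem_union, mem_pureTensor]; tauto

lemma isBiIdeal_pure_union {a b : A} {c d : B} (hab : a ≤ b) (hcd : c ≤ d) :
    IsBiIdeal (pureTensor a d ∪ pureTensor b c) := by
  refine ⟨?_, ?_, ?_, ?_, ?_⟩
  · intro p q hq hp
    rw [Prod.le_def] at hq
    rw [mem_pure_union] at hp ⊢
    rcases hp with h | h | ⟨h1, h2⟩ | ⟨h1, h2⟩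
    · exact Or.inl (le_bot_iff.mp (h ▸ hq.1))
    · exact Or.inr (Or.inl (le_bot_iff.mp (h ▸ hq.2)))
    · exact Or.inr (Or.inr (Or.inl ⟨hq.1.trans h1, hq.2.trans h2⟩))
    · exact Or.inr (Or.inr (Or.inr ⟨hq.1.trans h1, hq.2.trans h2⟩))
  · intro x; rw [mem_pure_union]; exact Or.inr (Or.inl rfl)
  · intro y; rw [mem_pure_union]; exact Or.inl rfl
  · intro a₀ a₁ y h₀ h₁
    rw [mem_pure_union] at h₀ h₁ ⊢
    dsimp only at *
    rcases h₀ with h | h | ⟨h1, h2⟩ | ⟨h1, h2⟩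
    · rcases h₁ with h' | h' | ⟨h1', h2'⟩ | ⟨h1', h2'⟩
      · exact Or.inl (by simp [h, h'])
      · exact Or.inr (Or.inl h')
      · exact Or.inr (Or.inr (Or.inl ⟨sup_le (by simp [h]) h1', h2'⟩))
      · exact Or.inr (Or.inr (Or.inr ⟨sup_le (by simp [h]) h1', h2'⟩))
    · exact Or.inr (Or.inl h)
    · rcases h₁ with h' | h' | ⟨h1', h2'⟩ | ⟨h1', h2'⟩
      · exact Or.inr (Or.inr (Or.inl ⟨sup_le h1 (by simp [h']), h2⟩))
      · exact Or.inr (Or.inl h')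
      · exact Or.inr (Or.inr (Or.inl ⟨sup_le h1 h1', h2⟩))
      · exact Or.inr (Or.inr (Or.inr ⟨sup_le (h1.trans hab) h1', h2'⟩))
    · rcases h₁ with h' | h' | ⟨h1', h2'⟩ | ⟨h1', h2'⟩
      · exact Or.inr (Or.inr (Or.inr ⟨sup_le h1 (by simp [h']), h2⟩))
      · exact Or.inr (Or.inl h')
      · exact Or.inr (Or.inr (Or.inr ⟨sup_le h1 (h1'.trans hab), h2⟩))
      · exact Or.inr (Or.inr (Or.inr ⟨sup_le h1 h1', h2⟩))
  · intro x y₀ y₁ h₀ h₁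
    rw [mem_pure_union] at h₀ h₁ ⊢
    dsimp only at *
    rcases h₀ with h | h | ⟨h1, h2⟩ | ⟨h1, h2⟩
    · exact Or.inl h
    · rcases h₁ with h' | h' | ⟨h1', h2'⟩ | ⟨h1', h2'⟩
      · exact Or.inl h'
      · exact Or.inr (Or.inl (by simp [h, h']))
      · exact Or.inr (Or.inr (Or.inl ⟨h1', sup_le (by simp [h]) h2'⟩))
      · exact Or.inr (Or.inr (Or.inr ⟨h1', sup_le (by simp [h]) h2'⟩))
    · rcases h₁ with h' | h' | ⟨h1', h2'⟩ | ⟨h1', h2'⟩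
      · exact Or.inl h'
      · exact Or.inr (Or.inr (Or.inl ⟨h1, sup_le h2 (by simp [h'])⟩))
      · exact Or.inr (Or.inr (Or.inl ⟨h1, sup_le h2 h2'⟩))
      · exact Or.inr (Or.inr (Or.inl ⟨h1, sup_le h2 (h2'.trans hcd)⟩))
    · rcases h₁ with h' | h' | ⟨h1', h2'⟩ | ⟨h1', h2'⟩
      · exact Or.inl h'
      · exact Or.inr (Or.inr (Or.inr ⟨h1, sup_le h2 (by simp [h'])⟩))
      · exact Or.inr (Or.inr (Or.inl ⟨h1', sup_le (h2.trans hcd) h2'⟩))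
      · exact Or.inr (Or.inr (Or.inr ⟨h1, sup_le h2 h2'⟩))

lemma biGen_of_biIdeal {X : Set (A × B)} (h : IsBiIdeal X) : biGen X = X :=
  subset_antisymm (Set.sInter_subset_of_mem ⟨h, subset_rfl⟩)
    (Set.subset_sInter fun _ hK => hK.2)

lemma latCong_iff_inf_sup {L : Type*} [Lattice L] {α : L → L → Prop} (h : IsLatCong α)
    {x y : L} : α x y ↔ α (x ⊓ y) (x ⊔ y) := by
  obtain ⟨heq, hop⟩ := h
  constructor
  · intro hxy
    have h1 := (hop x y y y hxy (heq.refl y)).1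
    have h2 := (hop x y y y hxy (heq.refl y)).2
    rw [sup_idem] at h1
    rw [inf_idem] at h2
    exact heq.trans h2 (heq.symm h1)
  · intro hm
    have h1 := (hop (x ⊓ y) (x ⊔ y) x x hm (heq.refl x)).1
    have h2 := (hop (x ⊓ y) (x ⊔ y) y y hm (heq.refl y)).1
    have e1 : (x ⊓ y) ⊔ x = x := by simp
    have e2 : (x ⊔ y) ⊔ x = x ⊔ y := by
      rw [sup_comm]; exact sup_eq_right.mpr le_sup_left
    have e3 : (x ⊓ y) ⊔ y = y := by simp
    have e4 : (x ⊔ y) ⊔ y = x ⊔ y := by rw [sup_assoc, sup_idem]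
    rw [e1, e2] at h1
    rw [e3, e4] at h2
    exact heq.trans h1 (heq.symm h2)


/-- `α ⊙_C β ≤ α′ ⊠_C β′` if and only if `α ≤ α′` or `β ≤ β′`. -/
theorem odot_le_boxtimes_iff {A B : Type*} [Lattice A] [OrderBot A]
    [Lattice B] [OrderBot B] (C : Set (Set (A × B))) (hC : IsSubTensorProduct C)
    (α α' : A → A → Prop) (hα : IsLatCong α) (hα' : IsLatCong α')
    (β β' : B → B → Prop) (hβ : IsLatCong β) (hβ' : IsLatCong β') :
    (∀ H ∈ C, ∀ K ∈ C,
        (boxCong α (fun y y' : B => y = y') H K ∧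
          boxCong (fun x x' : A => x = x') β H K) → boxCong α' β' H K) ↔
      ((∀ x y : A, α x y → α' x y) ∨ (∀ x y : B, β x y → β' x y)) := by
  constructor
  · intro h
    by_contra hcon
    push_neg at hcon
    obtain ⟨hA, hB⟩ := hcon
    obtain ⟨x, y, hxy, hxy'⟩ := hA
    obtain ⟨u, v, huv, huv'⟩ := hB
    set a := x ⊓ y with ha
    set b := x ⊔ y with hb
    set c := u ⊓ v with hc
    set d := u ⊔ v with hd
    have hab : a ≤ b := inf_le_sup
    have hcd : c ≤ d := inf_le_sup
    have hαab : α a b := (latCong_iff_inf_sup hα).mp hxy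
    have hα'ab : ¬ α' a b := fun hh => hxy' ((latCong_iff_inf_sup hα').mpr hh)
    have hβcd : β c d := (latCong_iff_inf_sup hβ).mp huv
    have hβ'cd : ¬ β' c d := fun hh => huv' ((latCong_iff_inf_sup hβ').mpr hh)
    set H : Set (A × B) := pureTensor a d ∪ pureTensor b c with hHdef
    have hHC : H ∈ C := by
      have := hC.2.2.1 a b d c (Or.inl ⟨hab, hcd⟩)
      rwa [biSup, biGen_of_biIdeal (isBiIdeal_pure_union hab hcd)] at this
    have hKC : pureTensor b d ∈ C := hC.2.1 b d
    have hsub : ∀ p : A × B, p ∈ H → p ∈ pureTensor b d := by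
      intro p hp
      rw [hHdef, mem_pure_union] at hp
      rw [mem_pureTensor]
      rcases hp with h | h | ⟨h1, h2⟩ | ⟨h1, h2⟩
      · exact Or.inl h
      · exact Or.inr (Or.inl h)
      · exact Or.inr (Or.inr ⟨h1.trans hab, h2⟩)
      · exact Or.inr (Or.inr ⟨h1, h2.trans hcd⟩)
    have hbox : boxCong α' β' H (pureTensor b d) := by
      refine h H hHC (pureTensor b d) hKC ⟨⟨?_, ?_⟩, ⟨?_, ?_⟩⟩
      · intro p hp
        exact ⟨p, hsub p hp, hα.1.refl _, rfl⟩
      · intro q hq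
        rw [mem_pureTensor] at hq
        rcases hq with hq | hq | ⟨h1, h2⟩
        · exact ⟨q, by rw [hHdef, mem_pure_union]; exact Or.inl hq, hα.1.refl _, rfl⟩
        · exact ⟨q, by rw [hHdef, mem_pure_union]; exact Or.inr (Or.inl hq),
            hα.1.refl _, rfl⟩
        · refine ⟨(q.1 ⊓ a, q.2), ?_, ?_, rfl⟩
          · rw [hHdef, mem_pure_union]
            exact Or.inr (Or.inr (Or.inl ⟨inf_le_right, h2⟩))
          · have h3 := (hα.2 q.1 q.1 a b (hα.1.refl q.1) hαab).2
            rw [inf_eq_left.mpr h1] at h3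
            exact hα.1.symm h3
      · intro p hp
        exact ⟨p, hsub p hp, rfl, hβ.1.refl _⟩
      · intro q hq
        rw [mem_pureTensor] at hq
        rcases hq with hq | hq | ⟨h1, h2⟩
        · exact ⟨q, by rw [hHdef, mem_pure_union]; exact Or.inl hq, rfl, hβ.1.refl _⟩
        · exact ⟨q, by rw [hHdef, mem_pure_union]; exact Or.inr (Or.inl hq),
            rfl, hβ.1.refl _⟩
        · refine ⟨(q.1, q.2 ⊓ c), ?_, rfl, ?_⟩
          · rw [hHdef, mem_pure_union]
            exact Or.inr (Or.inr (Or.inr ⟨h1, inf_le_right⟩))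
          · have h3 := (hβ.2 q.2 q.2 c d (hβ.1.refl q.2) hβcd).2
            rw [inf_eq_left.mpr h2] at h3
            exact hβ.1.symm h3
    have hbd : ((b, d) : A × B) ∈ pureTensor b d := by
      rw [mem_pureTensor]; exact Or.inr (Or.inr ⟨le_rfl, le_rfl⟩)
    obtain ⟨p, hpH, hb', hd'⟩ := hbox.2 (b, d) hbd
    have key : p.1 ≤ a ∨ p.2 ≤ c := by
      rw [hHdef, mem_pure_union] at hpH
      rcases hpH with h | h | ⟨h1, _⟩ | ⟨_, h2⟩
      · exact Or.inl (h ▸ bot_le)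
      · exact Or.inr (h ▸ bot_le)
      · exact Or.inl h1
      · exact Or.inr h2
    rcases key with hpa | hpc
    · apply hα'ab
      have h3 := (hα'.2 b p.1 a a hb' (hα'.1.refl a)).1
      rw [sup_eq_left.mpr hab, sup_eq_right.mpr hpa] at h3
      exact hα'.1.symm h3
    · apply hβ'cd
      have h3 := (hβ'.2 d p.2 c c hd' (hβ'.1.refl c)).1
      rw [sup_eq_left.mpr hcd, sup_eq_right.mpr hpc] at h3
      exact hβ'.1.symm h3
  · rintro (h | h) H _ K _ ⟨⟨f1, f2⟩, g1, g2⟩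
    · constructor
      · intro p hp
        obtain ⟨q, hq, h1, h2⟩ := f1 p hp
        exact ⟨q, hq, h _ _ h1, by rw [h2]; exact hβ'.1.refl _⟩
      · intro q hq
        obtain ⟨p, hp, h1, h2⟩ := f2 q hq
        exact ⟨p, hp, h _ _ h1, by rw [h2]; exact hβ'.1.refl _⟩
    · constructor
      · intro p hp
        obtain ⟨q, hq, h1, h2⟩ := g1 p hp
        exact ⟨q, hq, by rw [h1]; exact hα'.1.refl _, h _ _ h2⟩
      · intro q hq
        obtain ⟨p, hp, h1, h2⟩ := g2 q hq
        exact ⟨p, hp, by rw [h1]; exact hα'.1.refl _, h _ _ h2⟩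
end
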